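/- In the concrete quasi-free CAR model with λ : ℤ → ℝ, 0 < λ_l < 1: let L = {l₁ < l₂ < ... < l_p} be a finite subset of ℤ. Then there exists a function c assigning to each subset L₁ ⊆ L a NONZERO real number c(L₁), such that (a_{l₁}∘a_{l₂}∘⋯∘a_{l_p}∘a_{l_p}*∘⋯∘a_{l₂}*∘a_{l₁}*) Ω = Σ_{L₁ ⊆ L} c(L₁)·e_{(L₁,L₁)}, the sum running over all (possibly empty) subsets L₁ of L. -/

import Mathlib

/- The concrete quasi-free CAR model: `H = ℓ²(Finset ℤ × Finset ℤ)` with orthonormal basis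
`e (A, B)`, vacuum `Ω = e (∅, ∅)`, and operators `a l`, `b l`, `G` given on the basis by the
quasi-free formulas with symbol `λ` (diagonal, `R h_l = λ_l h_l`). -/

noncomputable section

/-- The GNS Hilbert space: `ℓ²` over pairs of finite subsets of `ℤ`. -/
abbrev CARSpace := lp (fun _ : Finset ℤ × Finset ℤ => ℂ) 2

/-- The orthonormal basis vector `e_{(A,B)}`. -/
def carE (p : Finset ℤ × Finset ℤ) : CARSpace := lp.single 2 p 1

/-- The vacuum vector `Ω = e_{(∅,∅)}`. -/
def carΩ : CARSpace := carE (∅, ∅)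

/-- `n(l, X)` = number of elements of `X` strictly below `l`. -/
def nlt (l : ℤ) (X : Finset ℤ) : ℕ := (X.filter fun j => j < l).card

/-- `a` is the family of quasi-free annihilation-type operators `a_l = π_R(a(h_l))`:
`a_l e_{(A,B)} = √(1−λ_l)·(−1)^{|B|}·(−1)^{n(l,A)}·[l ∉ A]·e_{(A∪{l},B)}
              + √(λ_l)·(−1)^{n(l,B)}·[l ∈ B]·e_{(A,B∖{l})}`. -/
def IsCAR_a (lam : ℤ → ℝ) (a : ℤ → CARSpace →L[ℂ] CARSpace) : Prop :=
  ∀ (l : ℤ) (A B : Finset ℤ),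
    a l (carE (A, B)) =
      ((Real.sqrt (1 - lam l) : ℂ) * (-1) ^ B.card * (-1) ^ nlt l A *
          (if l ∈ A then 0 else 1)) • carE (insert l A, B) +
      ((Real.sqrt (lam l) : ℂ) * (-1) ^ nlt l B *
          (if l ∈ B then 1 else 0)) • carE (A, B.erase l)

/-- `b` is the family of commutant quasi-free operators:
`b_l e_{(A,B)} = √(λ_l)·(−1)^{|B|}·(−1)^{n(l,A)}·[l ∉ A]·e_{(A∪{l},B)}
              − √(1−λ_l)·(−1)^{n(l,B)}·[l ∈ B]·e_{(A,B∖{l})}`. -/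
def IsCAR_b (lam : ℤ → ℝ) (b : ℤ → CARSpace →L[ℂ] CARSpace) : Prop :=
  ∀ (l : ℤ) (A B : Finset ℤ),
    b l (carE (A, B)) =
      ((Real.sqrt (lam l) : ℂ) * (-1) ^ B.card * (-1) ^ nlt l A *
          (if l ∈ A then 0 else 1)) • carE (insert l A, B) -
      ((Real.sqrt (1 - lam l) : ℂ) * (-1) ^ nlt l B *
          (if l ∈ B then 1 else 0)) • carE (A, B.erase l)

/-- `G = Γ⊗Γ` : `G e_{(A,B)} = (−1)^{|A|+|B|} e_{(A,B)}`. -/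
def IsCAR_G (G : CARSpace →L[ℂ] CARSpace) : Prop :=
  ∀ (A B : Finset ℤ), G (carE (A, B)) = ((-1 : ℂ) ^ (A.card + B.card)) • carE (A, B)

lemma carE_apply (p q : Finset ℤ × Finset ℤ) : (carE p) q = if q = p then (1:ℂ) else 0 := by
  by_cases h : q = p
  · subst h; simp [carE, lp.single_apply_self]
  · simp [carE, lp.single_apply_ne 2 p 1 h, h]

lemma inner_carE_left (p : Finset ℤ × Finset ℤ) (x : CARSpace) :
    (inner ℂ (carE p) x : ℂ) = x p := by
  rw [carE, lp.inner_single_left]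
  simp [RCLike.inner_apply]

lemma carE_ext {x y : CARSpace} (h : ∀ p, (inner ℂ (carE p) x : ℂ) = inner ℂ (carE p) y) :
    x = y :=
  lp.ext (funext fun p => by rw [← inner_carE_left p x, ← inner_carE_left p y]; exact h p)

lemma inner_carE_carE (p q : Finset ℤ × Finset ℤ) :
    (inner ℂ (carE p) (carE q) : ℂ) = if p = q then 1 else 0 := by
  rw [inner_carE_left, carE_apply]

lemma nlt_insert_self (l : ℤ) (X : Finset ℤ) : nlt l (insert l X) = nlt l X := by
  rw [nlt, nlt, Finset.filter_insert, if_neg (lt_irrefl l)]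

lemma star_a_apply {lam : ℤ → ℝ} {a : ℤ → CARSpace →L[ℂ] CARSpace} (ha : IsCAR_a lam a)
    (l : ℤ) (A B : Finset ℤ) :
    star (a l) (carE (A, B)) =
      ((Real.sqrt (1 - lam l) : ℂ) * (-1) ^ B.card * (-1) ^ nlt l A *
          (if l ∈ A then 1 else 0)) • carE (A.erase l, B) +
      ((Real.sqrt (lam l) : ℂ) * (-1) ^ nlt l B *
          (if l ∈ B then 0 else 1)) • carE (A, insert l B) := by
  apply carE_ext
  rintro ⟨A', B'⟩
  rw [ContinuousLinearMap.star_eq_adjoint, ContinuousLinearMap.adjoint_inner_right,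
    ha l A' B']
  rw [inner_add_left, inner_smul_left, inner_smul_left, inner_add_right,
    inner_smul_right, inner_smul_right, inner_carE_carE, inner_carE_carE,
    inner_carE_carE, inner_carE_carE]
  simp only [map_mul, map_pow, map_neg, map_one, map_zero, Complex.conj_ofReal,
    apply_ite (starRingEnd ℂ)]
  congr 1
  · -- creation/ annihilation-in-A term
    by_cases hA' : l ∈ A'
    · by_cases hA : l ∈ A
      · have hne : (A', B') ≠ (A.erase l, B) := by
          intro h
          have h1 : A' = A.erase l := congrArg Prod.fst h
          rw [h1] at hA'
          exact Finset.notMem_erase l A hA'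
        simp [hA', hA, hne]
      · simp [hA', hA]
    · by_cases hA : l ∈ A
      · by_cases h : insert l A' = A ∧ B' = B
        · obtain ⟨h1, h2⟩ := h
          subst h2
          have hAe : A.erase l = A' := by rw [← h1, Finset.erase_insert hA']
          have hn : nlt l A = nlt l A' := by rw [← h1, nlt_insert_self]
          simp [hA', hA, h1, hAe, hn]
        · have h1 : (insert l A', B') ≠ (A, B) := by
            intro he
            exact h ⟨congrArg Prod.fst he, congrArg Prod.snd he⟩
          have h2 : (A', B') ≠ (A.erase l, B) := by
            intro he
            apply h
            have hA2 : A' = A.erase l := congrArg Prod.fst he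
            have hB2 : B' = B := congrArg Prod.snd he
            exact ⟨by rw [hA2, Finset.insert_erase hA], hB2⟩
          simp [h1, h2]
      · have h1 : (insert l A', B') ≠ (A, B) := by
          intro he
          have : insert l A' = A := congrArg Prod.fst he
          exact hA (this ▸ Finset.mem_insert_self l A')
        simp [h1, hA]
  · -- annihilation-in-B term
    by_cases hB' : l ∈ B'
    · by_cases hB : l ∈ B
      · have h1 : (A', B'.erase l) ≠ (A, B) := by
          intro he
          have : B'.erase l = B := congrArg Prod.snd he
          rw [← this] at hB
          exact Finset.notMem_erase l B' hB
        simp [h1, hB]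
      · by_cases h : A' = A ∧ B'.erase l = B
        · obtain ⟨h1, h2⟩ := h
          subst h1
          have hBi : B' = insert l B := by rw [← h2, Finset.insert_erase hB']
          have hn : nlt l B' = nlt l B := by rw [hBi, nlt_insert_self]
          simp [hB', hB, h2, hBi, nlt_insert_self]
        · have h1 : (A', B'.erase l) ≠ (A, B) := by
            intro he
            exact h ⟨congrArg Prod.fst he, congrArg Prod.snd he⟩
          have h2 : (A', B') ≠ (A, insert l B) := by
            intro he
            apply h
            have hA2 : A' = A := congrArg Prod.fst he
            have hB2 : B' = insert l B := congrArg Prod.snd he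
            exact ⟨hA2, by rw [hB2, Finset.erase_insert hB]⟩
          simp [h1, h2]
    · by_cases hB : l ∈ B
      · simp [hB', hB]
      · have h2 : (A', B') ≠ (A, insert l B) := by
          intro he
          have : B' = insert l B := congrArg Prod.snd he
          exact hB' (this ▸ Finset.mem_insert_self l B)
        simp [hB', h2]



lemma star_chain {lam : ℤ → ℝ} {a : ℤ → CARSpace →L[ℂ] CARSpace} (ha : IsCAR_a lam a)
    (hlam : ∀ l, 0 < lam l ∧ lam l < 1) :
    ∀ (s : List ℤ), s.Nodup → ∀ (B : Finset ℤ), (∀ x ∈ s, x ∉ B) →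
      ∃ c : ℝ, c ≠ 0 ∧
        ((s.reverse.map fun l => star (a l)).prod) (carE (∅, B)) =
          (c : ℂ) • carE (∅, B ∪ s.toFinset) := by
  intro s
  induction s with
  | nil => intro _ B _; exact ⟨1, one_ne_zero, by simp⟩
  | cons l t ih =>
      intro hnd B hB
      have hlB : l ∉ B := hB l (by simp)
      obtain ⟨hlt, hnd'⟩ := List.nodup_cons.mp hnd
      obtain ⟨c, hc, hrec⟩ := ih hnd' (insert l B) (fun x hx => by
        simp only [Finset.mem_insert, not_or]
        exact ⟨fun h => hlt (h ▸ hx), hB x (List.mem_cons_of_mem l hx)⟩)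
      refine ⟨(Real.sqrt (lam l) * (-1 : ℝ) ^ nlt l B) * c, ?_, ?_⟩
      · exact mul_ne_zero (mul_ne_zero
          (Real.sqrt_ne_zero'.mpr (hlam l).1) (pow_ne_zero _ (by norm_num))) hc
      · rw [List.reverse_cons, List.map_append, List.prod_append]
        simp only [List.map_cons, List.map_nil, List.prod_cons, List.prod_nil, mul_one]
        rw [ContinuousLinearMap.mul_apply, star_a_apply ha l ∅ B]
        simp only [Finset.notMem_empty, if_false, hlB, mul_zero, zero_smul, zero_add,
          mul_one]
        rw [map_smul, hrec, smul_smul, List.toFinset_cons, Finset.union_insert,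
          ← Finset.insert_union]
        congr 1
        push_cast
        ring

lemma a_chain {lam : ℤ → ℝ} {a : ℤ → CARSpace →L[ℂ] CARSpace} (ha : IsCAR_a lam a)
    (hlam : ∀ l, 0 < lam l ∧ lam l < 1) :
    ∀ (s : List ℤ), s.Nodup → ∀ (B : Finset ℤ), (∀ x ∈ s, x ∈ B) →
      ∃ c : Finset ℤ → ℝ, (∀ K ⊆ s.toFinset, c K ≠ 0) ∧
        ((s.map a).prod) (carE (∅, B)) =
          ∑ K ∈ s.toFinset.powerset, (c K : ℂ) • carE (K, (B \ s.toFinset) ∪ K) := by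
  intro s
  induction s with
  | nil =>
      intro _ B _
      exact ⟨fun _ => 1, fun _ _ => one_ne_zero, by simp⟩
  | cons l t ih =>
      intro hnd B hB
      obtain ⟨hlt, hnd'⟩ := List.nodup_cons.mp hnd
      have hlB : l ∈ B := hB l (by simp)
      obtain ⟨c, hc, hrec⟩ := ih hnd' B (fun x hx => hB x (List.mem_cons_of_mem l hx))
      have hltS : l ∉ t.toFinset := by simpa using hlt
      classical
      refine ⟨fun K' => if l ∈ K' then
          (Real.sqrt (1 - lam l) * (-1:ℝ) ^ ((B \ t.toFinset ∪ K'.erase l).card) *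
            (-1:ℝ) ^ (nlt l (K'.erase l))) * c (K'.erase l)
        else (Real.sqrt (lam l) * (-1:ℝ) ^ (nlt l (B \ t.toFinset ∪ K'))) * c K', ?_, ?_⟩
      · intro K hK
        rw [List.toFinset_cons] at hK
        by_cases hlK : l ∈ K
        · simp only [hlK, if_true]
          refine mul_ne_zero (mul_ne_zero (mul_ne_zero
            (Real.sqrt_ne_zero'.mpr (by linarith [(hlam l).2]))
            (pow_ne_zero _ (by norm_num))) (pow_ne_zero _ (by norm_num))) (hc _ ?_)
          intro x hx
          have hxK : x ∈ K := Finset.mem_of_mem_erase hx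
          have := hK hxK
          rcases Finset.mem_insert.mp this with h | h
          · exact absurd h (Finset.ne_of_mem_erase hx)
          · exact h
        · simp only [hlK, if_false]
          refine mul_ne_zero (mul_ne_zero
            (Real.sqrt_ne_zero'.mpr (hlam l).1) (pow_ne_zero _ (by norm_num))) (hc _ ?_)
          intro x hx
          rcases Finset.mem_insert.mp (hK hx) with h | h
          · exact absurd (h ▸ hx) hlK
          · exact h
      · rw [List.map_cons, List.prod_cons, ContinuousLinearMap.mul_apply, hrec, map_sum,
          List.toFinset_cons]
        have step : ∀ K ∈ t.toFinset.powerset,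
            (a l) ((c K : ℂ) • carE (K, B \ t.toFinset ∪ K)) =
              (((Real.sqrt (lam l) * (-1:ℝ) ^ (nlt l (B \ t.toFinset ∪ K))) * c K : ℝ) : ℂ) •
                  carE (K, B \ insert l t.toFinset ∪ K) +
              (((Real.sqrt (1 - lam l) * (-1:ℝ) ^ ((B \ t.toFinset ∪ K).card) *
                  (-1:ℝ) ^ (nlt l K)) * c K : ℝ) : ℂ) •
                  carE (insert l K, B \ insert l t.toFinset ∪ insert l K) := by
          intro K hK
          have hKt : K ⊆ t.toFinset := Finset.mem_powerset.mp hK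
          have hlK : l ∉ K := fun h => hltS (hKt h)
          have hlBK : l ∈ B \ t.toFinset ∪ K :=
            Finset.mem_union_left _ (Finset.mem_sdiff.mpr ⟨hlB, hltS⟩)
          have E1 : B \ insert l t.toFinset ∪ insert l K = B \ t.toFinset ∪ K := by
            ext x
            by_cases hx : x = l
            · subst hx
              simp [hlB, hltS]
            · simp [Finset.mem_sdiff, Finset.mem_union, Finset.mem_insert, hx]
          have E2 : (B \ t.toFinset ∪ K).erase l = B \ insert l t.toFinset ∪ K := by
            ext x
            by_cases hx : x = l
            · subst hx
              simp [hlK]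
            · simp [Finset.mem_sdiff, Finset.mem_union, Finset.mem_insert, hx]
          rw [map_smul, ha l K (B \ t.toFinset ∪ K), if_neg hlK, if_pos hlBK, E2, E1,
            smul_add, smul_smul, smul_smul]
          rw [add_comm]
          congr 1 <;> · congr 1; push_cast; ring
        rw [Finset.sum_congr rfl step, Finset.sum_add_distrib,
          Finset.sum_powerset_insert hltS]
        congr 1
        · exact Finset.sum_congr rfl fun K hK => by
            have hlK : l ∉ K := fun h => hltS (Finset.mem_powerset.mp hK h)
            simp [hlK]
        · refine Finset.sum_congr rfl fun K hK => ?_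
          have hlK : l ∉ K := fun h => hltS (Finset.mem_powerset.mp hK h)
          simp only [Finset.mem_insert_self, if_true, Finset.erase_insert hlK]

/-- let `L = {l₁ < l₂ < ... < l_p}` be a finite subset of `ℤ`. Then there is
a function `c` assigning to each subset `L₁ ⊆ L` a NONZERO real number `c(L₁)` such that
`(a_{l₁}∘⋯∘a_{l_p}∘a_{l_p}*∘⋯∘a_{l₁}*) Ω = Σ_{L₁ ⊆ L} c(L₁)·e_{(L₁,L₁)}`. -/
theorem stmt10 (lam : ℤ → ℝ) (hlam : ∀ l, 0 < lam l ∧ lam l < 1)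
    (a : ℤ → CARSpace →L[ℂ] CARSpace) (ha : IsCAR_a lam a)
    (L : Finset ℤ) :
    ∃ c : Finset ℤ → ℝ, (∀ L₁ ⊆ L, c L₁ ≠ 0) ∧
      (((L.sort (· ≤ ·)).map a).prod *
          ((L.sort (· ≤ ·)).reverse.map fun l => star (a l)).prod) carΩ =
        ∑ L₁ ∈ L.powerset, (c L₁ : ℂ) • carE (L₁, L₁) := by
  classical
  obtain ⟨c0, hc0, h0⟩ := star_chain ha hlam (L.sort (· ≤ ·))
    (Finset.sort_nodup _ _) ∅ (by simp)
  obtain ⟨c, hc, h1⟩ := a_chain ha hlam (L.sort (· ≤ ·))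
    (Finset.sort_nodup _ _) L (fun x hx => (Finset.mem_sort _).mp hx)
  rw [Finset.sort_toFinset, Finset.empty_union] at h0
  rw [Finset.sort_toFinset, Finset.sdiff_self] at h1
  refine ⟨fun K => c0 * c K, fun K hK =>
    mul_ne_zero hc0 (hc K (by rwa [Finset.sort_toFinset])), ?_⟩
  rw [ContinuousLinearMap.mul_apply, carΩ, h0, map_smul, h1, Finset.smul_sum]
  refine Finset.sum_congr rfl fun K hK => ?_
  rw [smul_smul, Finset.empty_union]
  congr 1
  push_cast
  ring

end
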